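/- For every k ≥ 1 and every m ≥ 0, δ_{k+m}(2k+1) = 2^m · δ_k(2k+1); that is, beyond level k the number of occurrences of the odd number 2k+1 doubles at each subsequent level. -/

import Mathlib

open Matrix

/-- The three Farey matrices `A₀, A₁, A₂`. -/
def A : Fin 3 → Matrix (Fin 3) (Fin 3) ℤ :=
  ![!![1,0,1; 0,1,1; 0,0,1],
    !![0,0,1; 1,0,1; 0,1,1],
    !![0,1,1; 0,0,1; 1,0,1]]

/-- `Δ I = (v₁(I), v₂(I), v₃(I)) = (1,1,1)·A_{i₁}·⋯·A_{iₙ}`. -/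
def Δ (I : List (Fin 3)) : Fin 3 → ℤ :=
  Matrix.vecMul ![1,1,1] ((I.map A).prod)


/-- `δ n j m` : the number of tuples `I ∈ {0,1,2}ⁿ` with `v_{j+1}(I) = m`. -/
def δ (n : ℕ) (j : Fin 3) (m : ℤ) : ℕ :=
  (Finset.univ.filter (fun f : Fin n → Fin 3 => Δ (List.ofFn f) j = m)).card

/-- `δtot n m` : the number of occurrences of `m` at level `n`. -/
def δtot (n : ℕ) (m : ℤ) : ℕ := δ n 0 m + δ n 1 m + δ n 2 m

lemma delta_nil : Δ [] = ![1,1,1] := by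
  funext j; simp [Δ]

lemma delta_append (l : List (Fin 3)) (i : Fin 3) :
    Δ (l ++ [i]) = Matrix.vecMul (Δ l) (A i) := by
  unfold Δ
  rw [List.map_append, List.prod_append, List.map_singleton, List.prod_singleton,
    ← Matrix.vecMul_vecMul]

lemma vecMul_A0 (w : Fin 3 → ℤ) :
    Matrix.vecMul w (A 0) = ![w 0, w 1, w 0 + w 1 + w 2] := by
  funext j
  fin_cases j <;>
    (norm_num [A, Matrix.vecMul, dotProduct, Fin.sum_univ_three,
      Matrix.vecHead, Matrix.vecTail, Matrix.cons_val_zero, Matrix.cons_val_one, Matrix.cons_val_two]; try ring)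

lemma vecMul_A1 (w : Fin 3 → ℤ) :
    Matrix.vecMul w (A 1) = ![w 1, w 2, w 0 + w 1 + w 2] := by
  funext j
  fin_cases j <;>
    (norm_num [A, Matrix.vecMul, dotProduct, Fin.sum_univ_three,
      Matrix.vecHead, Matrix.vecTail, Matrix.cons_val_zero, Matrix.cons_val_one, Matrix.cons_val_two]; try ring)

lemma vecMul_A2 (w : Fin 3 → ℤ) :
    Matrix.vecMul w (A 2) = ![w 2, w 0, w 0 + w 1 + w 2] := by
  funext j
  fin_cases j <;>
    (norm_num [A, Matrix.vecMul, dotProduct, Fin.sum_univ_three,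
      Matrix.vecHead, Matrix.vecTail, Matrix.cons_val_zero, Matrix.cons_val_one, Matrix.cons_val_two]; try ring)

lemma delta_bound (l : List (Fin 3)) :
    (∀ j, 1 ≤ Δ l j) ∧ 2 * (l.length : ℤ) + 3 ≤ Δ l 0 + Δ l 1 + Δ l 2 := by
  induction l using List.reverseRecOn with
  | nil =>
    constructor
    · intro j; fin_cases j <;> simp [delta_nil]
    · simp [delta_nil]
  | append_singleton l i ih =>
    obtain ⟨h1, h2⟩ := ih
    have e0 := h1 0; have e1 := h1 1; have e2 := h1 2
    rw [delta_append]
    simp only [List.length_append, List.length_singleton]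
    push_cast
    fin_cases i <;>
      · first
        | rw [show A ⟨0, by norm_num⟩ = A 0 from rfl, vecMul_A0]
        | rw [show A ⟨1, by norm_num⟩ = A 1 from rfl, vecMul_A1]
        | rw [show A ⟨2, by norm_num⟩ = A 2 from rfl, vecMul_A2]
        constructor
        · intro j; fin_cases j <;> simp <;> linarith
        · simp; linarith

lemma ofFn_snoc' {n : ℕ} (g : Fin n → Fin 3) (i : Fin 3) :
    List.ofFn (Fin.snoc g i) = List.ofFn g ++ [i] := by
  rw [List.ofFn_succ']
  simp [Fin.snoc_castSucc, List.concat_eq_append]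

lemma delta_ofFn_succ {n : ℕ} (f : Fin (n+1) → Fin 3) :
    Δ (List.ofFn f) = Matrix.vecMul (Δ (List.ofFn (Fin.init f))) (A (f (Fin.last n))) := by
  rw [← delta_append, ← ofFn_snoc', Fin.snoc_init_self]

lemma delta_succ (n : ℕ) (j : Fin 3) (M : ℤ) :
    δ (n+1) j M = ∑ i : Fin 3,
      (Finset.univ.filter (fun g : Fin n → Fin 3 =>
        Matrix.vecMul (Δ (List.ofFn g)) (A i) j = M)).card := by
  classical
  rw [δ, ← Fintype.card_subtype]
  have e2 : {f : Fin (n+1) → Fin 3 // Δ (List.ofFn f) j = M} ≃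
      {p : Fin 3 × (Fin n → Fin 3) //
        Matrix.vecMul (Δ (List.ofFn p.2)) (A p.1) j = M} :=
    { toFun := fun f => ⟨(f.1 (Fin.last n), Fin.init f.1), by
        have h := f.2
        rw [delta_ofFn_succ] at h
        exact h⟩
      invFun := fun p => ⟨Fin.snoc p.1.2 p.1.1, by
        rw [delta_ofFn_succ]
        simpa using p.2⟩
      left_inv := fun f => Subtype.ext (Fin.snoc_init_self f.1)
      right_inv := fun p => Subtype.ext (by simp) }
  have e := e2.trans (Equiv.subtypeProdEquivSigmaSubtype
    (fun (i : Fin 3) (g : Fin n → Fin 3) =>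
      Matrix.vecMul (Δ (List.ofFn g)) (A i) j = M))
  rw [Fintype.card_congr e, Fintype.card_sigma]
  exact Finset.sum_congr rfl fun i _ => Fintype.card_subtype _

lemma double (n : ℕ) (M : ℤ) (hM : M < 2*n + 3) :
    δtot (n+1) M = 2 * δtot n M := by
  have h0 : δ (n+1) 0 M = δtot n M := by
    rw [delta_succ, Fin.sum_univ_three]
    simp only [vecMul_A0, vecMul_A1, vecMul_A2, Matrix.cons_val_zero]
    rfl
  have h1 : δ (n+1) 1 M = δtot n M := by
    rw [delta_succ, Fin.sum_univ_three]
    simp only [vecMul_A0, vecMul_A1, vecMul_A2, Matrix.cons_val_one, Matrix.head_cons, Matrix.cons_val_zero]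
    rw [δtot, δ, δ, δ]
    ring
  have h2 : δ (n+1) 2 M = 0 := by
    rw [delta_succ]
    apply Finset.sum_eq_zero
    intro i _
    rw [Finset.card_eq_zero, Finset.filter_eq_empty_iff]
    intro g _
    obtain ⟨hpos, hsum⟩ := delta_bound (List.ofFn g)
    rw [List.length_ofFn] at hsum
    fin_cases i <;>
      · first
        | rw [show A ⟨0, by norm_num⟩ = A 0 from rfl, vecMul_A0]
        | rw [show A ⟨1, by norm_num⟩ = A 1 from rfl, vecMul_A1]
        | rw [show A ⟨2, by norm_num⟩ = A 2 from rfl, vecMul_A2]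
        simp
        omega
  rw [δtot, h0, h1, h2, δtot]
  ring

theorem stmt9 (k m : ℕ) (hk : 1 ≤ k) :
    δtot (k + m) (2 * (k : ℤ) + 1) = 2 ^ m * δtot k (2 * (k : ℤ) + 1) := by
  induction m with
  | zero => simp
  | succ m ih =>
    rw [show k + (m+1) = (k+m) + 1 from rfl,
      double (k+m) _ (by push_cast; omega), ih, pow_succ]
    ring
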